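/- Let m00, m10, m20, m01, m11, m21 be nonnegative integers with m1+ = m10+m11, m2+ = m20+m21. Then ∫₀¹∫₀¹∫₀¹ 2^{m1+} · γ^{m1+}(1-γ)^{m2+}/(1+γ)^{m1+ + m2+} · u^{m10+m20}(1-u)^{m00} · v^{m11+m21}(1-v)^{m01} · [2^{1/2}/(B(1/2,1/2))³ · γ^{-1/2}(1-γ)^{-1/2}/(1+γ) · u^{-1/2}(1-u)^{-1/2} · v^{-1/2}(1-v)^{-1/2}] dγ du dv = B(m1+ + 1/2, m2+ + 1/2) · B(m10+m20+1/2, m00+1/2) · B(m11+m21+1/2, m01+1/2) / B(1/2,1/2)³. (This computes the marginal predictive distribution of the data under hypothesis H1: λ0 ≠ λ1 for Dallal's model with the reference prior, up to the multinomial coefficients.) -/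

import Mathlib

open MeasureTheory

/-- The Beta function `B(a,b) = Γ(a)Γ(b)/Γ(a+b)`. -/
noncomputable def betaFn (a b : ℝ) : ℝ := Real.Gamma a * Real.Gamma b / Real.Gamma (a + b)

/-- The marginal predictive distribution of the data under `H₁ : λ0 ≠ λ1` for
Dallal's model with Bernardo's reference prior (up to multinomial coefficients):
the likelihood in the `(γ,u,v)` parameterization integrated against the reference
prior over `(0,1)³` equals
`B(m1+ + 1/2, m2+ + 1/2)·B(m10+m20+1/2, m00+1/2)·B(m11+m21+1/2, m01+1/2)/B(1/2,1/2)³`. -/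
lemma beta_Ioo {a b : ℝ} (ha : 0 < a) (hb : 0 < b) :
    ∫ x in Set.Ioo (0 : ℝ) 1, x ^ (a - 1) * (1 - x) ^ (b - 1) = betaFn a b := by
  have h1 : Complex.betaIntegral a b =
      ((∫ x in Set.Ioo (0 : ℝ) 1, x ^ (a - 1) * (1 - x) ^ (b - 1) : ℝ) : ℂ) := by
    rw [Complex.betaIntegral]
    rw [show ∫ x in Set.Ioo (0:ℝ) 1, x ^ (a-1) * (1-x) ^ (b-1)
        = ∫ x in (0:ℝ)..1, x ^ (a-1) * (1-x) ^ (b-1) by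
      rw [intervalIntegral.integral_of_le zero_le_one, integral_Ioc_eq_integral_Ioo]]
    rw [← intervalIntegral.integral_ofReal]
    refine intervalIntegral.integral_congr fun x hx => ?_
    rw [Set.uIcc_of_le zero_le_one] at hx
    obtain ⟨hx0, hx1⟩ := hx
    rw [Complex.ofReal_mul, Complex.ofReal_cpow hx0, Complex.ofReal_cpow (by linarith : (0:ℝ) ≤ 1 - x)]
    push_cast
    ring
  have h2 := Complex.Gamma_mul_Gamma_eq_betaIntegral
    (s := (a:ℂ)) (t := (b:ℂ)) (by simpa using ha) (by simpa using hb)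
  rw [h1] at h2
  have h3 : ((Real.Gamma a * Real.Gamma b : ℝ) : ℂ)
      = ((Real.Gamma (a+b) * ∫ x in Set.Ioo (0:ℝ) 1, x ^ (a-1) * (1-x) ^ (b-1) : ℝ) : ℂ) := by
    push_cast
    rw [← Complex.Gamma_ofReal a, ← Complex.Gamma_ofReal b, ← Complex.Gamma_ofReal (a+b)]
    push_cast
    exact h2
  have h4 := Complex.ofReal_injective h3
  have hg : Real.Gamma (a + b) ≠ 0 := (Real.Gamma_pos_of_pos (by linarith)).ne'
  rw [betaFn]
  field_simp
  linarith [h4]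

lemma poly_beta (n m : ℕ) :
    ∫ x in Set.Ioo (0 : ℝ) 1, (x ^ n * (1 - x) ^ m) *
      (x ^ (-(1:ℝ)/2) * (1 - x) ^ (-(1:ℝ)/2)) = betaFn ((n:ℝ) + 1/2) ((m:ℝ) + 1/2) := by
  rw [← beta_Ioo (by positivity) (by positivity)]
  refine setIntegral_congr_fun measurableSet_Ioo fun x hx => ?_
  obtain ⟨hx0, hx1⟩ := hx
  have h1x : (0:ℝ) < 1 - x := by linarith
  rw [show (n:ℝ)+1/2-1 = (n:ℝ)+(-(1:ℝ)/2) by ring, show (m:ℝ)+1/2-1 = (m:ℝ)+(-(1:ℝ)/2) by ring,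
    Real.rpow_add hx0, Real.rpow_add h1x, Real.rpow_natCast, Real.rpow_natCast]
  ring

lemma beta_like {a b : ℝ} (ha : 0 < a) (hb : 0 < b) :
    ∫ x in Set.Ioo (0 : ℝ) 1, x ^ (a-1) * (1-x) ^ (b-1) * (1+x) ^ (-(a+b)) =
      2 ^ (-a) * betaFn a b := by
  have himg : (fun x : ℝ => x / (2 - x)) '' Set.Ioo 0 1 = Set.Ioo 0 1 := by
    ext y
    constructor
    · rintro ⟨x, ⟨hx0, hx1⟩, rfl⟩
      have h2x : (0:ℝ) < 2 - x := by linarith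
      constructor
      · positivity
      · rw [div_lt_one h2x]; linarith
    · rintro ⟨hy0, hy1⟩
      refine ⟨2*y/(1+y), ⟨by positivity, ?_⟩, ?_⟩
      · rw [div_lt_one (by linarith)]; linarith
      · have h1y : (0:ℝ) < 1 + y := by linarith
        field_simp
        ring
  have hderiv : ∀ x ∈ Set.Ioo (0:ℝ) 1, HasDerivWithinAt (fun x : ℝ => x / (2 - x))
      (2 / (2 - x)^2) (Set.Ioo 0 1) x := by
    intro x ⟨hx0, hx1⟩
    have h2x : (2:ℝ) - x ≠ 0 := by intro h; linarith [h]
    have := (hasDerivAt_id x).div ((hasDerivAt_id x).const_sub 2) h2x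
    have e : (2:ℝ) / (2 - x) ^ 2 = (1 * (2 - id x) - id x * -1) / (2 - id x) ^ 2 := by
      simp only [id_eq]; ring
    rw [e]
    exact this.hasDerivWithinAt
  have hinj : Set.InjOn (fun x : ℝ => x / (2 - x)) (Set.Ioo 0 1) := by
    rintro x ⟨hx0, hx1⟩ y ⟨hy0, hy1⟩ h
    have h2x : (2:ℝ) - x ≠ 0 := by intro h; linarith [h]
    have h2y : (2:ℝ) - y ≠ 0 := by intro h; linarith [h]
    field_simp at h
    linarith
  have key := integral_image_eq_integral_abs_deriv_smul measurableSet_Ioo hderiv hinj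
      (fun x => x ^ (a-1) * (1-x) ^ (b-1) * (1+x) ^ (-(a+b)))
  rw [himg] at key
  rw [key, ← beta_Ioo ha hb, ← MeasureTheory.integral_const_mul]
  refine setIntegral_congr_fun measurableSet_Ioo fun x hx => ?_
  obtain ⟨hx0, hx1⟩ := hx
  have h2x : (0:ℝ) < 2 - x := by linarith
  have h1x : (0:ℝ) < 1 - x := by linarith
  have e1 : x / (2 - x) = x / (2 - x) := rfl
  have hfx : (0:ℝ) < x / (2 - x) := by positivity
  have e2 : 1 - x / (2 - x) = 2 * (1 - x) / (2 - x) := by field_simp; ring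
  have e3 : 1 + x / (2 - x) = 2 / (2 - x) := by field_simp; ring
  rw [smul_eq_mul, e2, e3, abs_of_pos (by positivity : (0:ℝ) < 2 / (2-x)^2)]
  rw [Real.div_rpow hx0.le h2x.le, Real.div_rpow (by positivity) h2x.le,
    Real.div_rpow (by norm_num) h2x.le, Real.mul_rpow (by norm_num) h1x.le]
  rw [Real.rpow_neg (by norm_num : (0:ℝ) ≤ 2), Real.rpow_neg h2x.le (a+b)]
  have hc : ∀ p q : ℝ, (2 - x) ^ p * (2 - x) ^ q = (2 - x) ^ (p + q) :=
    fun p q => (Real.rpow_add h2x p q).symm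
  have h2 : ∀ p q : ℝ, (2:ℝ) ^ p * (2:ℝ) ^ q = (2:ℝ) ^ (p + q) :=
    fun p q => (Real.rpow_add (by norm_num) p q).symm
  have hcne : ∀ p : ℝ, (2 - x) ^ p ≠ 0 := fun p => (Real.rpow_pos_of_pos h2x p).ne'
  have h2ne : ∀ p : ℝ, (2:ℝ) ^ p ≠ 0 := fun p => (Real.rpow_pos_of_pos (by norm_num) p).ne'
  field_simp
  have cc : ((2-x):ℝ)^2 * ((2-x)^(a-1) * (2-x)^(b-1) * 2^(a+b)) = (2-x)^(a+b) * 2^(a+b) := by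
    rw [hc, ← Real.rpow_natCast (2-x) 2, ← mul_assoc, hc,
      show ((2:ℕ):ℝ)+(a-1+(b-1)) = a+b by push_cast; ring]
  have h2pow : (2:ℝ) * 2^(b-1) = 2^(-a) * 2^(a+b) := by
    rw [h2, show -a+(a+b) = b by ring,
      show (2:ℝ)*2^(b-1) = 2^(1:ℝ)*2^(b-1) by rw [Real.rpow_one], h2]
    norm_num
  linear_combination (2-x) ^ (a+b) * h2pow - 2 ^ (-a) * cc

lemma gamma_int (n m : ℕ) :
    ∫ γ in Set.Ioo (0:ℝ) 1, (γ ^ n * (1-γ) ^ m / (1+γ) ^ (n+m)) *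
        (γ ^ (-(1:ℝ)/2) * (1-γ) ^ (-(1:ℝ)/2) / (1+γ)) =
      2 ^ (-((n:ℝ)+1/2)) * betaFn ((n:ℝ)+1/2) ((m:ℝ)+1/2) := by
  rw [← beta_like (by positivity) (by positivity)]
  refine setIntegral_congr_fun measurableSet_Ioo fun γ hγ => ?_
  obtain ⟨hγ0, hγ1⟩ := hγ
  have h1γ : (0:ℝ) < 1 - γ := by linarith
  have h1p : (0:ℝ) < 1 + γ := by linarith
  rw [show (n:ℝ)+1/2-1 = (n:ℝ)+(-(1:ℝ)/2) by ring, show (m:ℝ)+1/2-1 = (m:ℝ)+(-(1:ℝ)/2) by ring,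
    Real.rpow_add hγ0, Real.rpow_add h1γ, Real.rpow_natCast, Real.rpow_natCast,
    show -(((n:ℝ)+1/2)+((m:ℝ)+1/2)) = -(((n+m : ℕ):ℝ)) + (-1) by push_cast; ring,
    Real.rpow_add h1p, Real.rpow_neg h1p.le, Real.rpow_natCast, Real.rpow_neg_one]
  have hne : ((1+γ)^(n+m) : ℝ) ≠ 0 := by positivity
  field_simp

theorem dallal_marginal_predictive_H1_reference_prior
    (m00 m10 m20 m01 m11 m21 : ℕ) :
    ∫ γ in Set.Ioo (0 : ℝ) 1, ∫ u in Set.Ioo (0 : ℝ) 1, ∫ v in Set.Ioo (0 : ℝ) 1,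
        (2 : ℝ) ^ (m10 + m11) *
          (γ ^ (m10 + m11) * (1 - γ) ^ (m20 + m21) /
            (1 + γ) ^ ((m10 + m11) + (m20 + m21))) *
          (u ^ (m10 + m20) * (1 - u) ^ m00) * (v ^ (m11 + m21) * (1 - v) ^ m01) *
        ((2 : ℝ) ^ ((1 : ℝ) / 2) / betaFn (1 / 2) (1 / 2) ^ 3 *
          (γ ^ (-(1 : ℝ) / 2) * (1 - γ) ^ (-(1 : ℝ) / 2) / (1 + γ)) *
          (u ^ (-(1 : ℝ) / 2) * (1 - u) ^ (-(1 : ℝ) / 2)) *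
          (v ^ (-(1 : ℝ) / 2) * (1 - v) ^ (-(1 : ℝ) / 2))) =
      betaFn ((m10 : ℝ) + m11 + 1 / 2) ((m20 : ℝ) + m21 + 1 / 2) *
        betaFn ((m10 : ℝ) + m20 + 1 / 2) ((m00 : ℝ) + 1 / 2) *
        betaFn ((m11 : ℝ) + m21 + 1 / 2) ((m01 : ℝ) + 1 / 2) /
        betaFn (1 / 2) (1 / 2) ^ 3 := by
  set K : ℝ := 2 ^ (m10 + m11) * ((2:ℝ) ^ ((1:ℝ)/2) / betaFn (1/2) (1/2) ^ 3) with hK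
  have hsplit : ∀ γ u v : ℝ,
      (2 : ℝ) ^ (m10 + m11) *
          (γ ^ (m10 + m11) * (1 - γ) ^ (m20 + m21) /
            (1 + γ) ^ ((m10 + m11) + (m20 + m21))) *
          (u ^ (m10 + m20) * (1 - u) ^ m00) * (v ^ (m11 + m21) * (1 - v) ^ m01) *
        ((2 : ℝ) ^ ((1 : ℝ) / 2) / betaFn (1 / 2) (1 / 2) ^ 3 *
          (γ ^ (-(1 : ℝ) / 2) * (1 - γ) ^ (-(1 : ℝ) / 2) / (1 + γ)) *
          (u ^ (-(1 : ℝ) / 2) * (1 - u) ^ (-(1 : ℝ) / 2)) *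
          (v ^ (-(1 : ℝ) / 2) * (1 - v) ^ (-(1 : ℝ) / 2)))
      = K * ((γ ^ (m10 + m11) * (1-γ) ^ (m20 + m21) / (1+γ) ^ ((m10 + m11)+(m20 + m21)) *
            (γ ^ (-(1:ℝ)/2) * (1-γ) ^ (-(1:ℝ)/2) / (1+γ))) *
          ((u ^ (m10 + m20) * (1-u) ^ m00 * (u ^ (-(1:ℝ)/2) * (1-u) ^ (-(1:ℝ)/2))) *
           (v ^ (m11 + m21) * (1-v) ^ m01 * (v ^ (-(1:ℝ)/2) * (1-v) ^ (-(1:ℝ)/2))))) := by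
    intro γ u v
    rw [hK]
    ring
  simp_rw [hsplit, MeasureTheory.integral_const_mul, MeasureTheory.integral_mul_const]
  rw [gamma_int, poly_beta, poly_beta]
  have hβ : betaFn (1/2) (1/2) ≠ 0 := by
    have h1 := Real.Gamma_pos_of_pos (by norm_num : (0:ℝ) < 1/2)
    have h2 := Real.Gamma_pos_of_pos (by norm_num : (0:ℝ) < 1/2 + 1/2)
    exact ne_of_gt (div_pos (mul_pos h1 h1) h2)
  have h2one : (2:ℝ) ^ (m10 + m11) * (2:ℝ) ^ ((1:ℝ)/2) *
      2 ^ (-((m10:ℝ) + m11 + 1/2)) = 1 := by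
    rw [← Real.rpow_natCast 2 (m10 + m11), ← Real.rpow_add two_pos, ← Real.rpow_add two_pos,
      show ((m10 + m11 : ℕ):ℝ) + 1/2 + -((m10:ℝ) + m11 + 1/2) = 0 by push_cast; ring,
      Real.rpow_zero]
  rw [hK]
  push_cast
  linear_combination (betaFn ((m10:ℝ) + m11 + 1/2) ((m20:ℝ) + m21 + 1/2) *
    betaFn ((m10:ℝ) + m20 + 1/2) ((m00:ℝ) + 1/2) *
    betaFn ((m11:ℝ) + m21 + 1/2) ((m01:ℝ) + 1/2) / betaFn (1/2) (1/2)^3) * h2one
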